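/- Let a(z) = √((−z⁴ + 16z²)/(8(z² + 2))) for z ∈ (2√2, 4). Then a is differentiable and satisfies a′(z)/a(z) = (z² − 4)(z² + 8)/(z(z² + 2)(z² − 16)), and the expression H(z) = z·(z·a′(z) − a(z))/√(z² − a(z)²) − 4a′(z)/√(4 − a(z)²) − 2a′(z)/√(1 − a(z)²) is identically zero. -/

import Mathlib

noncomputable def aFun (z : ℝ) : ℝ :=
  Real.sqrt ((-z ^ 4 + 16 * z ^ 2) / (8 * (z ^ 2 + 2)))

theorem stmt14 :
    ∀ z ∈ Set.Ioo (2 * Real.sqrt 2) 4,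
      DifferentiableAt ℝ aFun z ∧
      deriv aFun z / aFun z =
        (z ^ 2 - 4) * (z ^ 2 + 8) / (z * (z ^ 2 + 2) * (z ^ 2 - 16)) ∧
      z * (z * deriv aFun z - aFun z) / Real.sqrt (z ^ 2 - aFun z ^ 2) -
        4 * deriv aFun z / Real.sqrt (4 - aFun z ^ 2) -
        2 * deriv aFun z / Real.sqrt (1 - aFun z ^ 2) = 0 := by
  rintro z ⟨h1, h2⟩
  have hs2 : (0:ℝ) < Real.sqrt 2 := Real.sqrt_pos.2 (by norm_num)
  have hz0 : 0 < z := lt_trans (by positivity) h1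
  have h8 : 8 < z ^ 2 := by
    have : (2 * Real.sqrt 2) ^ 2 = 8 := by
      rw [mul_pow, Real.sq_sqrt (by norm_num : (0:ℝ) ≤ 2)]; norm_num
    nlinarith [sq_nonneg (z - 2 * Real.sqrt 2)]
  have h16 : z ^ 2 < 16 := by nlinarith
  have hden : (0:ℝ) < 8 * (z ^ 2 + 2) := by positivity
  have hgpos : 0 < (-z ^ 4 + 16 * z ^ 2) / (8 * (z ^ 2 + 2)) := by
    apply div_pos; nlinarith; exact hden
  set a := aFun z with ha
  have hapos : 0 < a := Real.sqrt_pos.2 hgpos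
  have ha2 : a ^ 2 = (-z ^ 4 + 16 * z ^ 2) / (8 * (z ^ 2 + 2)) :=
    Real.sq_sqrt hgpos.le
  -- derivative of inner function
  have hnum : HasDerivAt (fun z : ℝ => -z ^ 4 + 16 * z ^ 2) (-(4 * z ^ 3) + 16 * (2 * z)) z := by
    have := ((hasDerivAt_pow 4 z).neg.add ((hasDerivAt_pow 2 z).const_mul 16))
    exact this.congr_deriv (by ring)
  have hdenD : HasDerivAt (fun z : ℝ => 8 * (z ^ 2 + 2)) (8 * (2 * z)) z := by
    have := (((hasDerivAt_pow 2 z).add_const 2).const_mul 8)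
    exact this.congr_deriv (by ring)
  have hG : HasDerivAt (fun z : ℝ => (-z ^ 4 + 16 * z ^ 2) / (8 * (z ^ 2 + 2)))
      (-z * (z ^ 2 - 4) * (z ^ 2 + 8) / (4 * (z ^ 2 + 2) ^ 2)) z := by
    have := hnum.div hdenD hden.ne'
    refine this.congr_deriv ?_
    field_simp
    ring
  have hA : HasDerivAt aFun (1 / (2 * a) * (-z * (z ^ 2 - 4) * (z ^ 2 + 8) / (4 * (z ^ 2 + 2) ^ 2))) z := by
    have hs := (Real.hasDerivAt_sqrt hgpos.ne').comp z hG
    exact hs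
  have hdiff : DifferentiableAt ℝ aFun z := hA.differentiableAt
  have hderiv : deriv aFun z = 1 / (2 * a) * (-z * (z ^ 2 - 4) * (z ^ 2 + 8) / (4 * (z ^ 2 + 2) ^ 2)) :=
    hA.deriv
  refine ⟨hdiff, ?_, ?_⟩
  · rw [hderiv]
    have h1 : z ^ 2 - 16 ≠ 0 := by nlinarith
    have h2 : (z:ℝ) ^ 2 + 2 ≠ 0 := by positivity
    have e : 1 / (2 * a) * (-z * (z ^ 2 - 4) * (z ^ 2 + 8) / (4 * (z ^ 2 + 2) ^ 2)) / a
        = -z * (z ^ 2 - 4) * (z ^ 2 + 8) / (4 * (z ^ 2 + 2) ^ 2) / (2 * a ^ 2) := by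
      ring
    rw [e, ha2]
    rw [div_eq_div_iff (by positivity) (by
      intro h
      rcases mul_eq_zero.1 h with h' | h'
      · rcases mul_eq_zero.1 h' with h'' | h''
        · exact hz0.ne' h''
        · exact h2 h''
      · exact h1 h')]
    field_simp
    ring
  · rw [hderiv]
    have e1 : z ^ 2 - a ^ 2 = 9 * z ^ 4 / (8 * (z ^ 2 + 2)) := by
      rw [ha2]; field_simp; ring
    have e2 : 4 - a ^ 2 = (z ^ 2 + 8) ^ 2 / (8 * (z ^ 2 + 2)) := by
      rw [ha2]; field_simp; ring
    have e3 : 1 - a ^ 2 = (z ^ 2 - 4) ^ 2 / (8 * (z ^ 2 + 2)) := by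
      rw [ha2]; field_simp; ring
    rw [e1, e2, e3,
      Real.sqrt_div (by positivity) _, Real.sqrt_div (by positivity) _,
      Real.sqrt_div (by positivity) _,
      show (9 * z ^ 4 : ℝ) = (3 * z ^ 2) ^ 2 by ring,
      Real.sqrt_sq (by positivity), Real.sqrt_sq (by positivity),
      Real.sqrt_sq (by nlinarith)]
    set s := Real.sqrt (8 * (z ^ 2 + 2)) with hsdef
    have hspos : 0 < s := Real.sqrt_pos.2 hden
    have hsq : s ^ 2 = 8 * (z ^ 2 + 2) := Real.sq_sqrt hden.le
    have hP3 : z ^ 2 - 4 ≠ 0 := by nlinarith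
    have hP2 : z ^ 2 + 8 ≠ 0 := by positivity
    have hzp : z ^ 2 + 2 ≠ 0 := by positivity
    have hDa : z * (1 / (2 * a) * (-z * (z ^ 2 - 4) * (z ^ 2 + 8) / (4 * (z ^ 2 + 2) ^ 2))) - a
        = -9 * z ^ 4 / (2 * (z ^ 2 + 2) ^ 2) / (2 * a) := by
      rw [eq_div_iff (by positivity : (2 * a) ≠ 0)]
      have e : (z * (1 / (2 * a) * (-z * (z ^ 2 - 4) * (z ^ 2 + 8) / (4 * (z ^ 2 + 2) ^ 2))) - a) * (2 * a)
          = z * (-z * (z ^ 2 - 4) * (z ^ 2 + 8) / (4 * (z ^ 2 + 2) ^ 2)) - 2 * a ^ 2 := by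
        field_simp
      rw [e, ha2]
      field_simp
      ring
    rw [hDa]
    have h3z : (3 : ℝ) * z ^ 2 ≠ 0 := by positivity
    field_simp
    ring
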